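/- Let K be a symmetric positive semidefinite matrix indexed by a finite set, R > 0, and for an index set A define σ_A²(x) = K_{xx} − k_A(x)ᵀ(K_A + R²I)^{−1}k_A(x). If A' ⊆ A, then σ_A²(x) ≤ σ_{A'}²(x) for every index x. -/

import Mathlib

open Matrix

/-- Variational upper bound: for posdef `M`, `2 w⬝v - w⬝Mw ≤ v⬝M⁻¹v`. -/
lemma quad_le_inv_quad {n : Type*} [Fintype n] [DecidableEq n]
    (M : Matrix n n ℝ) (hM : M.PosDef) (v w : n → ℝ) :
    2 * (w ⬝ᵥ v) - w ⬝ᵥ (M *ᵥ w) ≤ v ⬝ᵥ (M⁻¹ *ᵥ v) := by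
  set p : n → ℝ := M⁻¹ *ᵥ v with hp
  have hMp : M *ᵥ p = v := by
    rw [hp, mulVec_mulVec, Matrix.mul_nonsing_inv _ hM.det_pos.ne'.isUnit, one_mulVec]
  have h0 : 0 ≤ (w - p) ⬝ᵥ (M *ᵥ (w - p)) := by
    have := hM.posSemidef.dotProduct_mulVec_nonneg (w - p)
    simpa using this
  have hsym : p ⬝ᵥ (M *ᵥ w) = w ⬝ᵥ v := by
    have hMt : Mᵀ = M := by simpa using hM.isHermitian.eq
    rw [Matrix.dotProduct_mulVec, ← Matrix.mulVec_transpose, hMt, hMp, dotProduct_comm]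
  have hwp : w ⬝ᵥ (M *ᵥ p) = w ⬝ᵥ v := by rw [hMp]
  have hpp : p ⬝ᵥ (M *ᵥ p) = v ⬝ᵥ p := by rw [hMp, dotProduct_comm]
  have hexp : (w - p) ⬝ᵥ (M *ᵥ (w - p)) =
      w ⬝ᵥ (M *ᵥ w) - 2 * (w ⬝ᵥ v) + v ⬝ᵥ p := by
    rw [mulVec_sub, dotProduct_sub, sub_dotProduct, sub_dotProduct, hsym, hwp, hpp]
    ring
  rw [hexp] at h0
  linarith

lemma smul_one_posDef {n : Type*} [Fintype n] [DecidableEq n] {R : ℝ} (hR : 0 < R) :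
    (R ^ 2 • (1 : Matrix n n ℝ)).PosDef := by
  rw [smul_one_eq_diagonal]
  exact Matrix.PosDef.diagonal fun _ => by positivity


/-- Monotonicity of GP posterior variance: conditioning on more observations
can only decrease the posterior variance. Here `σ_A²(x) = K x x - k_A(x)ᵀ
(K_A + R² I)⁻¹ k_A(x)` with `K_A` the principal submatrix of `K` indexed by
`A` and `k_A(x)` the vector `(K x a)_{a ∈ A}`; if `A' ⊆ A` then
`σ_A²(x) ≤ σ_{A'}²(x)`. -/
theorem posterior_variance_monotone
    {ι : Type*} [Fintype ι] [DecidableEq ι]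
    (K : Matrix ι ι ℝ) (hK : K.PosSemidef) (R : ℝ) (hR : 0 < R)
    (A' A : Finset ι) (hsub : A' ⊆ A) (x : ι)
    (σsq : Finset ι → ℝ)
    (hσsq : ∀ B : Finset ι, σsq B = K x x -
      (fun a : {a // a ∈ B} => K x a) ⬝ᵥ
        ((((Matrix.of fun a b : {a // a ∈ B} => K a b) +
            R ^ 2 • (1 : Matrix {a // a ∈ B} {a // a ∈ B} ℝ))⁻¹) *ᵥ
          fun a : {a // a ∈ B} => K x a)) :
    σsq A ≤ σsq A' := by
  classical
  -- Definitions
  set M : Matrix {a // a ∈ A} {a // a ∈ A} ℝ :=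
    (Matrix.of fun a b : {a // a ∈ A} => K a b) + R ^ 2 • 1 with hM
  set M' : Matrix {a // a ∈ A'} {a // a ∈ A'} ℝ :=
    (Matrix.of fun a b : {a // a ∈ A'} => K a b) + R ^ 2 • 1 with hM'
  set v : {a // a ∈ A} → ℝ := fun a => K x a with hv
  set v' : {a // a ∈ A'} → ℝ := fun a => K x a with hv'
  -- Positive definiteness
  have hMpd : M.PosDef :=
    Matrix.PosDef.posSemidef_add
      (hK.submatrix (fun a : {a // a ∈ A} => (a : ι))) (smul_one_posDef hR)
  have hM'pd : M'.PosDef :=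
    Matrix.PosDef.posSemidef_add
      (hK.submatrix (fun a : {a // a ∈ A'} => (a : ι))) (smul_one_posDef hR)
  -- the optimal weight for A'
  set w' : {a // a ∈ A'} → ℝ := M'⁻¹ *ᵥ v' with hw'
  set w : {a // a ∈ A} → ℝ :=
    fun a => if h : (a : ι) ∈ A' then w' ⟨a, h⟩ else 0 with hw
  -- embedding
  set e : {a // a ∈ A'} → {a // a ∈ A} := fun a => ⟨a, hsub a.2⟩ with he
  have einj : Function.Injective e := by
    intro a b hab
    apply Subtype.ext
    exact congrArg (Subtype.val : {a // a ∈ A} → ι) hab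
  have hwe : ∀ j : {a // a ∈ A'}, w (e j) = w' j := by
    intro j
    simp only [hw, he]
    rw [dif_pos j.2]
  -- general restriction lemma
  have hrestrict : ∀ f : {a // a ∈ A} → ℝ, (∀ i : {a // a ∈ A}, (i : ι) ∉ A' → f i = 0) →
      ∑ i, f i = ∑ j, f (e j) := by
    intro f hf
    have hmap : ∑ i ∈ Finset.univ.map ⟨e, einj⟩, f i = ∑ j, f (e j) := by
      rw [Finset.sum_map]
      rfl
    rw [← hmap]
    refine (Finset.sum_subset (Finset.subset_univ _) ?_).symm
    intro i _ hi
    refine hf i fun hmem => hi ?_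
    simp only [Finset.mem_map, Finset.mem_univ, Function.Embedding.coeFn_mk, true_and]
    exact ⟨⟨i, hmem⟩, Subtype.ext rfl⟩
  -- entrywise equalities
  have hMe : ∀ j j' : {a // a ∈ A'}, M (e j) (e j') = M' j j' := by
    intro j j'
    simp only [hM, hM', Matrix.add_apply, Matrix.of_apply, he, Matrix.smul_apply,
      Matrix.one_apply, smul_eq_mul]
    congr 2
    by_cases h : j = j'
    · simp [h]
    · rw [if_neg, if_neg h]
      exact fun hc => h (einj (Subtype.ext (congrArg Subtype.val hc)))
  -- dot products reduce
  have hdv : w ⬝ᵥ v = w' ⬝ᵥ v' := by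
    rw [dotProduct, dotProduct, hrestrict (fun i => w i * v i)
      (fun i hi => by simp [hw, dif_neg hi])]
    refine Finset.sum_congr rfl fun j _ => ?_
    rw [hwe]
  have hquad : w ⬝ᵥ (M *ᵥ w) = w' ⬝ᵥ (M' *ᵥ w') := by
    rw [dotProduct, dotProduct, hrestrict (fun i => w i * (M *ᵥ w) i)
      (fun i hi => by simp [hw, dif_neg hi])]
    refine Finset.sum_congr rfl fun j _ => ?_
    rw [hwe]
    congr 1
    rw [mulVec, mulVec, dotProduct, dotProduct,
      hrestrict (fun i => M (e j) i * w i) (fun i hi => by simp [hw, dif_neg hi])]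
    refine Finset.sum_congr rfl fun j' _ => ?_
    rw [hwe, hMe]
  -- the value at the optimum for A'
  have hopt : v' ⬝ᵥ (M'⁻¹ *ᵥ v') = 2 * (w' ⬝ᵥ v') - w' ⬝ᵥ (M' *ᵥ w') := by
    have hMw' : M' *ᵥ w' = v' := by
      rw [hw', mulVec_mulVec, Matrix.mul_nonsing_inv _ hM'pd.det_pos.ne'.isUnit, one_mulVec]
    rw [hMw', ← hw', dotProduct_comm w' v']
    ring
  have key : v' ⬝ᵥ (M'⁻¹ *ᵥ v') ≤ v ⬝ᵥ (M⁻¹ *ᵥ v) := by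
    calc v' ⬝ᵥ (M'⁻¹ *ᵥ v') = 2 * (w' ⬝ᵥ v') - w' ⬝ᵥ (M' *ᵥ w') := hopt
    _ = 2 * (w ⬝ᵥ v) - w ⬝ᵥ (M *ᵥ w) := by rw [hdv, hquad]
    _ ≤ v ⬝ᵥ (M⁻¹ *ᵥ v) := quad_le_inv_quad M hMpd v w
  rw [hσsq A, hσsq A']
  have h1 : (fun a : {a // a ∈ A} => K x a) ⬝ᵥ
      ((((Matrix.of fun a b : {a // a ∈ A} => K a b) +
          R ^ 2 • (1 : Matrix {a // a ∈ A} {a // a ∈ A} ℝ))⁻¹) *ᵥ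
        fun a : {a // a ∈ A} => K x a) = v ⬝ᵥ (M⁻¹ *ᵥ v) := rfl
  have h2 : (fun a : {a // a ∈ A'} => K x a) ⬝ᵥ
      ((((Matrix.of fun a b : {a // a ∈ A'} => K a b) +
          R ^ 2 • (1 : Matrix {a // a ∈ A'} {a // a ∈ A'} ℝ))⁻¹) *ᵥ
        fun a : {a // a ∈ A'} => K x a) = v' ⬝ᵥ (M'⁻¹ *ᵥ v') := rfl
  rw [h1, h2]
  linarith
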